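/- On the geometric grid α_i = α_0 q^i, let 0 ≤ j < m ≤ N be indices such that ψ_Q(α_{i}) ≤ ψ_Q(α_j) for all i with j < i ≤ m. Then ‖u_{α_m} − u_{α_j}‖ ≤ (q^{-1} − 1)(m − j) ψ_Q(α_j). -/

import Mathlib

open MeasureTheory
open scoped RealInnerProductSpace

noncomputable section

variable {H F : Type*} [NormedAddCommGroup H] [InnerProductSpace ℝ H] [CompleteSpace H]
  [NormedAddCommGroup F] [InnerProductSpace ℝ F] [CompleteSpace F]

/-- The inverse `(α I + A* A)⁻¹` (as `Ring.inverse`; for `α > 0` the operator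
`α I + A* A` is boundedly invertible, so `Ring.inverse` is its genuine inverse). -/
def tikInv (A : H →L[ℝ] F) (α : ℝ) : H →L[ℝ] H :=
  Ring.inverse (α • (1 : H →L[ℝ] H) + (ContinuousLinearMap.adjoint A).comp A)

/-- Tikhonov approximation `u_α = (α I + A* A)⁻¹ A* f`. -/
def tikSol (A : H →L[ℝ] F) (f : F) (α : ℝ) : H :=
  tikInv A α (ContinuousLinearMap.adjoint A f)

/-- Quasi-optimality function `ψ_Q(α) = α ‖(α I + A* A)⁻² A* f‖`. -/
def psiQ (A : H →L[ℝ] F) (f : F) (α : ℝ) : ℝ :=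
  α * ‖(tikInv A α ^ 2) (ContinuousLinearMap.adjoint A f)‖

/-- Error functional `e1(α) = ‖u_α⁺ - u_*‖ + ‖u_α - u_α⁺‖`. -/
def e1 (A : H →L[ℝ] F) (f fstar : F) (ustar : H) (α : ℝ) : ℝ :=
  ‖tikSol A fstar α - ustar‖ + ‖tikSol A f α - tikSol A fstar α‖

/-- Error functional `e2(α, δ) = ‖u_α⁺ - u_*‖ + δ/(2 √α)`. -/
def e2 (A : H →L[ℝ] F) (fstar : F) (ustar : H) (δ α : ℝ) : ℝ :=
  ‖tikSol A fstar α - ustar‖ + δ / (2 * Real.sqrt α)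

/-- Modified discrepancy `d_MD(α) = ‖B_α (A u_α - f)‖` where
`B_α = α^{1/2} (α I + A A*)^{-1/2}`; since `B_α` is positive and selfadjoint,
`‖B_α w‖² = α ⟪(α I + A A*)⁻¹ w, w⟫`, which is used as the definition. -/
def dMD (A : H →L[ℝ] F) (f : F) (α : ℝ) : ℝ :=
  Real.sqrt (α * ⟪(Ring.inverse (α • (1 : F →L[ℝ] F) + A.comp (ContinuousLinearMap.adjoint A)))
      (A (tikSol A f α) - f), A (tikSol A f α) - f⟫)

/-- `k` is a local minimum point of `j ↦ ψ(α_j)` on the grid `j = 0, …, N`: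
either `k ≤ N - 1`, `ψ k < ψ (k+1)` and (`k = 0` or there is `j ≥ 1` with
`ψ k = ψ (k-1) = ⋯ = ψ (k-j+1) < ψ (k-j)`); or `k = N` and there is `j ≥ 1` with
`ψ N = ⋯ = ψ (N-j+1) < ψ (N-j)`. -/
def IsLocMinIdx (ψ : ℕ → ℝ) (N k : ℕ) : Prop :=
  (k < N ∧ ψ k < ψ (k + 1) ∧
    (k = 0 ∨ ∃ j, 1 ≤ j ∧ j ≤ k ∧ (∀ i, k - j < i → i ≤ k → ψ i = ψ k) ∧ ψ k < ψ (k - j)))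
  ∨ (k = N ∧ ∃ j, 1 ≤ j ∧ j ≤ N ∧ (∀ i, N - j < i → i ≤ N → ψ i = ψ N) ∧ ψ N < ψ (N - j))


def Bop (A : H →L[ℝ] F) (α : ℝ) : H →L[ℝ] H :=
  α • (1 : H →L[ℝ] H) + (ContinuousLinearMap.adjoint A).comp A

lemma inner_Bop (A : H →L[ℝ] F) (α : ℝ) (x : H) :
    ⟪Bop A α x, x⟫ = α * ‖x‖ ^ 2 + ‖A x‖ ^ 2 := by
  simp [Bop, ContinuousLinearMap.add_apply, inner_add_left, real_inner_smul_left,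
    ContinuousLinearMap.adjoint_inner_left, real_inner_self_eq_norm_sq]

lemma norm_le_Bop (A : H →L[ℝ] F) {α : ℝ} (hα : 0 < α) (x : H) :
    α * ‖x‖ ≤ ‖Bop A α x‖ := by
  rcases eq_or_ne x 0 with rfl | hx
  · simp
  · have h1 : α * ‖x‖ ^ 2 ≤ ⟪Bop A α x, x⟫ := by
      rw [inner_Bop]; nlinarith [sq_nonneg ‖A x‖]
    have h2 : ⟪Bop A α x, x⟫ ≤ ‖Bop A α x‖ * ‖x‖ := real_inner_le_norm _ _
    have hxn : 0 < ‖x‖ := norm_pos_iff.mpr hx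
    nlinarith

lemma isUnit_Bop (A : H →L[ℝ] F) {α : ℝ} (hα : 0 < α) : IsUnit (Bop A α) := by
  have hbound : ∀ x, ‖x‖ ≤ (⟨α⁻¹, by positivity⟩ : NNReal) * ‖Bop A α x‖ := by
    intro x
    have := norm_le_Bop A hα x
    show ‖x‖ ≤ α⁻¹ * ‖(Bop A α) x‖
    have h2 : α⁻¹ * (α * ‖x‖) ≤ α⁻¹ * ‖(Bop A α) x‖ :=
      mul_le_mul_of_nonneg_left this (by positivity)
    rwa [inv_mul_cancel_left₀ hα.ne' ] at h2
  have hanti := (Bop A α).antilipschitz_of_bound hbound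
  have hinj : LinearMap.ker (Bop A α : H →ₗ[ℝ] H) = ⊥ := by
    exact LinearMap.ker_eq_bot.mpr hanti.injective
  have hclosed : IsClosed (Set.range (Bop A α)) :=
    hanti.isClosed_range (Bop A α).uniformContinuous
  have hcs : CompleteSpace (LinearMap.range (Bop A α : H →ₗ[ℝ] H)) := by
    refine @IsClosed.completeSpace_coe _ _ _ _ ?_
    exact hclosed
  have hsurj : LinearMap.range (Bop A α : H →ₗ[ℝ] H) = ⊤ := by
    rw [← Submodule.orthogonal_eq_bot_iff]
    rw [Submodule.eq_bot_iff]
    intro x hx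
    have h0 : ⟪Bop A α x, x⟫ = 0 := by
      exact hx (Bop A α x) (LinearMap.mem_range_self _ x)
    rw [inner_Bop] at h0
    by_contra hx0
    have hxp : 0 < ‖x‖ := norm_pos_iff.mpr hx0
    nlinarith [sq_nonneg ‖A x‖, mul_pos hα (pow_pos hxp 2)]
  let e := ContinuousLinearEquiv.ofBijective (Bop A α) hinj hsurj
  refine ⟨⟨(e : H →L[ℝ] H), (e.symm : H →L[ℝ] H), ?_, ?_⟩, ?_⟩
  · ext x; simp [ContinuousLinearMap.mul_apply]
  · ext x; simp [ContinuousLinearMap.mul_apply]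
  · ext x; simp [e]

lemma Bop_inner_symm (A : H →L[ℝ] F) (α : ℝ) (x y : H) :
    ⟪Bop A α x, y⟫ = ⟪x, Bop A α y⟫ := by
  simp [Bop, ContinuousLinearMap.add_apply, inner_add_left, inner_add_right,
    real_inner_smul_left, real_inner_smul_right,
    ContinuousLinearMap.adjoint_inner_left, ContinuousLinearMap.adjoint_inner_right]

lemma Bop_apply_inv (A : H →L[ℝ] F) {α : ℝ} (hα : 0 < α) (x : H) :
    Bop A α (Ring.inverse (Bop A α) x) = x := by
  have h := Ring.mul_inverse_cancel _ (isUnit_Bop A hα)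
  calc Bop A α (Ring.inverse (Bop A α) x)
      = (Bop A α * Ring.inverse (Bop A α)) x := rfl
    _ = x := by rw [h]; rfl

lemma inv_apply_Bop (A : H →L[ℝ] F) {α : ℝ} (hα : 0 < α) (x : H) :
    Ring.inverse (Bop A α) (Bop A α x) = x := by
  have h := Ring.inverse_mul_cancel _ (isUnit_Bop A hα)
  calc Ring.inverse (Bop A α) (Bop A α x)
      = (Ring.inverse (Bop A α) * Bop A α) x := rfl
    _ = x := by rw [h]; rfl

lemma inv_inner_symm (A : H →L[ℝ] F) {α : ℝ} (hα : 0 < α) (x y : H) :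
    ⟪Ring.inverse (Bop A α) x, y⟫ = ⟪x, Ring.inverse (Bop A α) y⟫ := by
  conv_lhs => rw [← Bop_apply_inv A hα y]
  rw [← Bop_inner_symm, Bop_apply_inv A hα]

lemma inv_inner_nonneg (A : H →L[ℝ] F) {α : ℝ} (hα : 0 < α) (x : H) :
    0 ≤ ⟪Ring.inverse (Bop A α) x, x⟫ := by
  set y := Ring.inverse (Bop A α) x with hy
  have hx : x = Bop A α y := (Bop_apply_inv A hα x).symm
  rw [hx, real_inner_comm, inner_Bop]
  positivity

lemma norm_inv_apply_le (A : H →L[ℝ] F) {α : ℝ} (hα : 0 < α) (x : H) :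
    ‖Ring.inverse (Bop A α) x‖ ≤ α⁻¹ * ‖x‖ := by
  have h := norm_le_Bop A hα (Ring.inverse (Bop A α) x)
  rw [Bop_apply_inv A hα] at h
  have h2 : α⁻¹ * (α * ‖Ring.inverse (Bop A α) x‖) ≤ α⁻¹ * ‖x‖ :=
    mul_le_mul_of_nonneg_left h (by positivity)
  rwa [inv_mul_cancel_left₀ hα.ne'] at h2

/-- Cauchy–Schwarz for the positive semidefinite form `⟪S ·, ·⟫`. -/
lemma semi_cs (S : H →L[ℝ] H) (hsymm : ∀ x y, ⟪S x, y⟫ = ⟪x, S y⟫)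
    (hpos : ∀ x, 0 ≤ ⟪S x, x⟫) (u v : H) :
    ⟪S u, v⟫ ^ 2 ≤ ⟪S u, u⟫ * ⟪S v, v⟫ := by
  have key : ∀ t : ℝ, 0 ≤ ⟪S u, u⟫ * (t * t) + (2 * ⟪S u, v⟫) * t + ⟪S v, v⟫ := by
    intro t
    have h := hpos (t • u + v)
    have hexp : ⟪S (t • u + v), t • u + v⟫ =
        ⟪S u, u⟫ * (t * t) + (2 * ⟪S u, v⟫) * t + ⟪S v, v⟫ := by
      have hvu : ⟪S v, u⟫ = ⟪S u, v⟫ := by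
        rw [hsymm v u, real_inner_comm]
      simp only [map_add, _root_.map_smul, inner_add_left, inner_add_right,
        real_inner_smul_left, real_inner_smul_right, hvu]
      ring
    linarith [hexp ▸ h]
  have hd := discrim_le_zero key
  rw [discrim] at hd
  nlinarith

lemma contraction (S : H →L[ℝ] H) (hsymm : ∀ x y, ⟪S x, y⟫ = ⟪x, S y⟫)
    (hpos : ∀ x, 0 ≤ ⟪S x, x⟫) (hnorm : ∀ x, ‖S x‖ ≤ ‖x‖) (x : H) :
    ‖x - S x‖ ≤ ‖x‖ := by
  have hS2 : ‖S x‖ ^ 2 ≤ 2 * ⟪S x, x⟫ := by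
    rcases eq_or_ne (S x) 0 with h0 | h0
    · rw [h0]; simpa using mul_nonneg (by norm_num) (hpos x)
    · have hcs := semi_cs S hsymm hpos x (S x)
      have h1 : ⟪S (S x), S x⟫ ≤ ‖S x‖ * ‖S x‖ := by
        calc ⟪S (S x), S x⟫ ≤ ‖S (S x)‖ * ‖S x‖ := real_inner_le_norm _ _
          _ ≤ ‖S x‖ * ‖S x‖ := by
            exact mul_le_mul_of_nonneg_right (hnorm (S x)) (norm_nonneg _)
      have h2 : ⟪S x, S x⟫ = ‖S x‖ ^ 2 := real_inner_self_eq_norm_sq _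
      have hp : 0 < ‖S x‖ := norm_pos_iff.mpr h0
      nlinarith [hpos x]
  have hsq : ‖x - S x‖ ^ 2 ≤ ‖x‖ ^ 2 := by
    have := norm_sub_sq_real x (S x)
    have hxs : ⟪x, S x⟫ = ⟪S x, x⟫ := real_inner_comm _ _
    nlinarith
  nlinarith [norm_nonneg (x - S x), norm_nonneg x]

set_option synthInstance.maxHeartbeats 1000000 in
/-- Resolvent identity: `R α = R β + (β - α) • (R β * R α)`. -/
lemma resolvent_id (A : H →L[ℝ] F) {α β : ℝ} (hα : 0 < α) (hβ : 0 < β) :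
    Ring.inverse (Bop A α) =
      Ring.inverse (Bop A β) + (β - α) • (Ring.inverse (Bop A β) * Ring.inverse (Bop A α)) := by
  set Rα := Ring.inverse (Bop A α)
  set Rβ := Ring.inverse (Bop A β)
  have hBβ : Bop A β = Bop A α + (β - α) • (1 : H →L[ℝ] H) := by
    simp only [Bop]
    rw [add_right_comm, ← add_smul]
    ring_nf
  have h1 : Rβ * Bop A β = 1 := Ring.inverse_mul_cancel _ (isUnit_Bop A hβ)
  have h2 : Bop A α * Rα = 1 := Ring.mul_inverse_cancel _ (isUnit_Bop A hα)
  calc Rα = 1 * Rα := (one_mul _).symm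
    _ = (Rβ * Bop A β) * Rα := by rw [h1]
    _ = (Rβ * (Bop A α + (β - α) • 1)) * Rα := by rw [← hBβ]
    _ = Rβ * (Bop A α * Rα) + (β - α) • (Rβ * Rα) := by
        simp only [mul_add, add_mul, mul_smul_comm, smul_mul_assoc, mul_one, one_mul, mul_assoc]
    _ = Rβ + (β - α) • (Rβ * Rα) := by rw [h2, mul_one]

def tikInv' (A : H →L[ℝ] F) (α : ℝ) : H →L[ℝ] H := Ring.inverse (Bop A α)

set_option synthInstance.maxHeartbeats 1000000 in
lemma Bop_commute (A : H →L[ℝ] F) (α β : ℝ) : Commute (Bop A α) (Bop A β) := by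
  unfold Commute SemiconjBy Bop
  simp only [mul_add, add_mul, smul_mul_assoc, mul_smul_comm, one_mul, mul_one, smul_smul,
    smul_add]
  rw [mul_comm α β]
  abel

set_option synthInstance.maxHeartbeats 1000000 in
lemma step_bound (A : H →L[ℝ] F) (f : F) {α β : ℝ} (hβ : 0 < β) (hβα : β ≤ α) :
    ‖Ring.inverse (Bop A β) (ContinuousLinearMap.adjoint A f)
      - Ring.inverse (Bop A α) (ContinuousLinearMap.adjoint A f)‖ ≤
      ((α - β) / β) * (β * ‖(Ring.inverse (Bop A β) * Ring.inverse (Bop A β))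
        (ContinuousLinearMap.adjoint A f)‖) := by
  have hα : 0 < α := lt_of_lt_of_le hβ hβα
  set g := ContinuousLinearMap.adjoint A f with hg
  set Rα := Ring.inverse (Bop A α) with hRα
  set Rβ := Ring.inverse (Bop A β) with hRβ
  have hres := resolvent_id A hα hβ
  rw [← hRα, ← hRβ] at hres
  have hRcomm : Commute Rα Rβ := (Bop_commute A α β).ringInverse_ringInverse
  have hdiff : Rβ g - Rα g = (α - β) • ((Rβ * Rα) g) := by
    conv_lhs => rw [hres]
    simp only [ContinuousLinearMap.add_apply, ContinuousLinearMap.smul_apply]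
    module
  have hopid : Rβ * Rα = Rβ * Rβ - (α - β) • (Rα * (Rβ * Rβ)) := by
    calc Rβ * Rα = Rβ * (Rβ + (β - α) • (Rβ * Rα)) := by conv_lhs => rw [hres]
      _ = Rβ * Rβ + (β - α) • (Rβ * (Rβ * Rα)) := by rw [mul_add, mul_smul_comm]
      _ = Rβ * Rβ - (α - β) • (Rα * (Rβ * Rβ)) := by
          have h3 : Rβ * (Rβ * Rα) = Rα * (Rβ * Rβ) := by
            rw [← mul_assoc]
            exact (hRcomm.mul_right hRcomm).eq.symm
          rw [h3]
          module
  -- contraction operator S = (α - β) • Rα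
  set S : H →L[ℝ] H := (α - β) • Rα with hS
  have hkey : (Rβ * Rα) g = (Rβ * Rβ) g - S ((Rβ * Rβ) g) := by
    rw [hopid]
    simp only [ContinuousLinearMap.sub_apply, ContinuousLinearMap.smul_apply,
      ContinuousLinearMap.mul_apply, hS]
  have hcontr : ‖(Rβ * Rβ) g - S ((Rβ * Rβ) g)‖ ≤ ‖(Rβ * Rβ) g‖ := by
    apply contraction
    · intro x y
      simp only [hS, ContinuousLinearMap.smul_apply, real_inner_smul_left, real_inner_smul_right]
      rw [inv_inner_symm A hα]
    · intro x
      simp only [hS, ContinuousLinearMap.smul_apply, real_inner_smul_left]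
      exact mul_nonneg (by linarith) (inv_inner_nonneg A hα x)
    · intro x
      simp only [hS, ContinuousLinearMap.smul_apply, norm_smul, Real.norm_eq_abs,
        abs_of_nonneg (by linarith : (0:ℝ) ≤ α - β)]
      calc (α - β) * ‖Rα x‖ ≤ (α - β) * (α⁻¹ * ‖x‖) :=
            mul_le_mul_of_nonneg_left (norm_inv_apply_le A hα x) (by linarith)
        _ ≤ 1 * ‖x‖ := by
            rw [← mul_assoc]
            apply mul_le_mul_of_nonneg_right _ (norm_nonneg x)
            have h4 : (α - β) * α⁻¹ ≤ α * α⁻¹ :=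
              mul_le_mul_of_nonneg_right (by linarith) (by positivity)
            rwa [mul_inv_cancel₀ hα.ne'] at h4
        _ = ‖x‖ := one_mul _
  have heq : ((α - β) / β) * (β * ‖(Rβ * Rβ) g‖) = (α - β) * ‖(Rβ * Rβ) g‖ := by
    field_simp
  rw [hdiff, heq, norm_smul, Real.norm_eq_abs, abs_of_nonneg (by linarith : (0:ℝ) ≤ α - β)]
  apply mul_le_mul_of_nonneg_left _ (by linarith)
  rw [hkey]
  exact hcontr

lemma tikSol_eq (A : H →L[ℝ] F) (f : F) (α : ℝ) :
    tikSol A f α = Ring.inverse (Bop A α) (ContinuousLinearMap.adjoint A f) := rfl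

lemma psiQ_eq (A : H →L[ℝ] F) (f : F) (α : ℝ) :
    psiQ A f α = α * ‖(Ring.inverse (Bop A α) * Ring.inverse (Bop A α))
      (ContinuousLinearMap.adjoint A f)‖ := by
  unfold psiQ
  rw [sq]
  rfl

lemma psiQ_nonneg (A : H →L[ℝ] F) (f : F) {α : ℝ} (hα : 0 ≤ α) : 0 ≤ psiQ A f α := by
  unfold psiQ
  positivity

/-- on the grid `α_i = α_0 q^i`, if `ψ_Q(α_i) ≤ ψ_Q(α_j)` for all
`j < i ≤ m`, then `‖u_{α_m} - u_{α_j}‖ ≤ (q⁻¹ - 1)(m - j) ψ_Q(α_j)`. -/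
theorem norm_sub_grid_le (A : H →L[ℝ] F) (f : F)
    (q : ℝ) (hq : q ∈ Set.Ioo (0 : ℝ) 1) (α0 : ℝ) (hα0 : 0 < α0)
    (N j m : ℕ) (hjm : j < m) (hmN : m ≤ N)
    (hψ : ∀ i, j < i → i ≤ m → psiQ A f (α0 * q ^ i) ≤ psiQ A f (α0 * q ^ j)) :
    ‖tikSol A f (α0 * q ^ m) - tikSol A f (α0 * q ^ j)‖ ≤
      (q⁻¹ - 1) * ((m - j : ℕ) : ℝ) * psiQ A f (α0 * q ^ j) := by
  obtain ⟨hq0, hq1⟩ := hq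
  have hqne : q ≠ 0 := hq0.ne'
  have hqinv : (0:ℝ) ≤ q⁻¹ - 1 := by
    rw [sub_nonneg]
    nlinarith [mul_inv_cancel₀ hqne, inv_pos.mpr hq0]
  have hstep : ∀ i : ℕ, ‖tikSol A f (α0 * q ^ (i+1)) - tikSol A f (α0 * q ^ i)‖ ≤
      (q⁻¹ - 1) * psiQ A f (α0 * q ^ (i+1)) := by
    intro i
    have hβ : 0 < α0 * q ^ (i+1) := by positivity
    have hβα : α0 * q ^ (i+1) ≤ α0 * q ^ i :=
      mul_le_mul_of_nonneg_left (pow_le_pow_of_le_one hq0.le hq1.le (Nat.le_succ i)) hα0.le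
    have h := step_bound A f hβ hβα
    rw [← tikSol_eq, ← tikSol_eq] at h
    have hco : (α0 * q ^ i - α0 * q ^ (i+1)) / (α0 * q ^ (i+1)) = q⁻¹ - 1 := by
      field_simp
      ring
    rw [hco] at h
    rwa [psiQ_eq]
  have hψj : 0 ≤ psiQ A f (α0 * q ^ j) := psiQ_nonneg A f (by positivity)
  clear hmN
  induction m, hjm using Nat.le_induction with
  | base =>
      have h1 := hstep j
      have h2 := hψ (j+1) (Nat.lt_succ_self j) le_rfl
      have h3 : j + 1 - j = 1 := by omega
      rw [h3]
      calc ‖tikSol A f (α0 * q ^ (j+1)) - tikSol A f (α0 * q ^ j)‖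
          ≤ (q⁻¹ - 1) * psiQ A f (α0 * q ^ (j+1)) := h1
        _ ≤ (q⁻¹ - 1) * psiQ A f (α0 * q ^ j) := mul_le_mul_of_nonneg_left h2 hqinv
        _ = (q⁻¹ - 1) * ((1:ℕ):ℝ) * psiQ A f (α0 * q ^ j) := by push_cast; ring
  | succ m hm ih =>
      have hψ' : ∀ i, j < i → i ≤ m → psiQ A f (α0 * q ^ i) ≤ psiQ A f (α0 * q ^ j) :=
        fun i h1 h2 => hψ i h1 (Nat.le_succ_of_le h2)
      have ih' := ih hψ'
      have htri : ‖tikSol A f (α0 * q ^ (m+1)) - tikSol A f (α0 * q ^ j)‖ ≤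
          ‖tikSol A f (α0 * q ^ (m+1)) - tikSol A f (α0 * q ^ m)‖ +
          ‖tikSol A f (α0 * q ^ m) - tikSol A f (α0 * q ^ j)‖ := by
        have := norm_add_le (tikSol A f (α0 * q ^ (m+1)) - tikSol A f (α0 * q ^ m))
          (tikSol A f (α0 * q ^ m) - tikSol A f (α0 * q ^ j))
        simpa using this
      have h1 := hstep m
      have h2 := hψ (m+1) (by omega) le_rfl
      have hmul : (q⁻¹ - 1) * psiQ A f (α0 * q ^ (m+1)) ≤
          (q⁻¹ - 1) * psiQ A f (α0 * q ^ j) := mul_le_mul_of_nonneg_left h2 hqinv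
      have hc : m + 1 - j = (m - j) + 1 := by omega
      rw [hc]
      push_cast
      calc ‖tikSol A f (α0 * q ^ (m+1)) - tikSol A f (α0 * q ^ j)‖
          ≤ ‖tikSol A f (α0 * q ^ (m+1)) - tikSol A f (α0 * q ^ m)‖ +
            ‖tikSol A f (α0 * q ^ m) - tikSol A f (α0 * q ^ j)‖ := htri
        _ ≤ (q⁻¹ - 1) * psiQ A f (α0 * q ^ j) +
            (q⁻¹ - 1) * ((m - j : ℕ) : ℝ) * psiQ A f (α0 * q ^ j) :=
              add_le_add (le_trans h1 hmul) ih'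
        _ = (q⁻¹ - 1) * (((m - j : ℕ) : ℝ) + 1) * psiQ A f (α0 * q ^ j) := by ring
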